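/- Let h : ℝ^N → ℝ be given by h(z) = (1/2)‖Xz − b‖₂². Then for every j and every z ∈ ℝ^N, the third partial derivative of z ↦ e^{−h(z)} with respect to z_j satisfies |∂³/∂z_j³ e^{−h(z)}| ≤ 6·c₀·((XᵀX)_{jj})^{3/2}, where c₀ = (1/2)e^{−√3/2}(3^{1/4}+3^{−1/4}). -/

import Mathlib

open Matrix

set_option maxHeartbeats 1000000

private lemma sum4_eq' (t : ℝ) : ∑ m ∈ Finset.range 4, t ^ m / (m.factorial : ℝ)
    = 1 + t + t^2/2 + t^3/6 := by
  norm_num [Finset.sum_range_succ, Nat.factorial]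

private lemma cubic_le_exp' {t : ℝ} (ht : 0 ≤ t) : 1 + t + t^2/2 + t^3/6 ≤ Real.exp t := by
  calc 1 + t + t^2/2 + t^3/6 = ∑ m ∈ Finset.range 4, t ^ m / (m.factorial : ℝ) :=
        (sum4_eq' t).symm
    _ ≤ Real.exp t := Real.sum_le_exp_of_nonneg ht 4

private lemma cubic_sub_le_exp' {t : ℝ} (ht : |t| ≤ 1) :
    1 + t + t^2/2 + t^3/6 - 5*t^4/96 ≤ Real.exp t := by
  have h := Real.exp_bound ht (n := 4) (by norm_num)
  rw [abs_sub_le_iff] at h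
  have h1 := h.2
  rw [sum4_eq'] at h1
  norm_num [Nat.factorial] at h1
  have habs : |t|^4 = t^4 := by
    rw [← abs_pow]; exact abs_of_nonneg (by positivity)
  rw [habs] at h1
  nlinarith [h1]

private lemma key_sup' (q r : ℝ) (hq0 : 0 < q) (hq4 : q^4 = 3) (hr : 0 ≤ r) :
    (3*r + r^3) * Real.exp (-(r^2/2)) ≤ (3*q + q^3) * Real.exp (-(q^2/2)) := by
  have hq1 : 1 ≤ q := by
    by_contra hc; push_neg at hc
    have h2 : q^2 < 1 := by nlinarith
    nlinarith
  have hq43 : q ≤ 4/3 := by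
    by_contra hc; push_neg at hc
    have h2 : 16/9 < q^2 := by nlinarith
    nlinarith
  have hq13 : 13/10 ≤ q := by
    by_contra hc; push_neg at hc
    have h2 : q^2 < 169/100 := by nlinarith
    nlinarith
  suffices hs : 3*r + r^3 ≤ (3*q + q^3) * Real.exp ((r^2 - q^2)/2) by
    have he : Real.exp ((r^2 - q^2)/2) * Real.exp (-(r^2/2)) = Real.exp (-(q^2/2)) := by
      rw [← Real.exp_add]; ring_nf
    calc (3*r + r^3) * Real.exp (-(r^2/2))
        ≤ ((3*q + q^3) * Real.exp ((r^2 - q^2)/2)) * Real.exp (-(r^2/2)) :=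
          mul_le_mul_of_nonneg_right hs (Real.exp_pos _).le
      _ = (3*q + q^3) * Real.exp (-(q^2/2)) := by rw [mul_assoc, he]
  set t : ℝ := (r^2 - q^2)/2 with htdef
  have hDpos : (0:ℝ) < 3*q + q^3 := by positivity
  rcases le_or_gt q r with hqr | hqr
  · have ht0 : 0 ≤ t := by rw [htdef]; nlinarith
    have c0 : (0:ℝ) ≤ (13*q^3 - 5*q)/16 := by nlinarith
    have c1 : (0:ℝ) ≤ (5*q^2-5)/8*r := mul_nonneg (by nlinarith) hr
    have c2 : (0:ℝ) ≤ (3*q+q^3)/8*r^2 := mul_nonneg (by positivity) (sq_nonneg r)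
    have c3 : (0:ℝ) ≤ (1+q^2)/8*r^3 := by positivity
    have c4 : (0:ℝ) ≤ (q/16 + q^3/48)*r^4 := by positivity
    have hQ : 0 ≤ (13*q^3 - 5*q)/16 + (5*q^2-5)/8*r + (3*q+q^3)/8*r^2
        + (1+q^2)/8*r^3 + (q/16 + q^3/48)*r^4 := by linarith
    have hid : (3*q+q^3)*(1 + t + t^2/2 + t^3/6) - (3*r + r^3)
        = (r-q)^2 * ((13*q^3 - 5*q)/16 + (5*q^2-5)/8*r + (3*q+q^3)/8*r^2
            + (1+q^2)/8*r^3 + (q/16 + q^3/48)*r^4) := by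
      rw [htdef]
      linear_combination (-(q^5)/48 + q^3/16 + r^2*q^3/16 - q - 3*r^2*q/16 - r^4*q/12
        + r + r^3/8 + r^5/24) * hq4
    have hcub := cubic_le_exp' ht0
    linarith [mul_le_mul_of_nonneg_left hcub hDpos.le, mul_nonneg (sq_nonneg (r-q)) hQ]
  · have htle : |t| ≤ 1 := by
      rw [abs_le]; constructor <;> rw [htdef] <;> nlinarith
    have hr43 : r ≤ 4/3 := hqr.le.trans hq43
    have h5 : r^5 ≤ (64/27)*r^2 := by
      have h3 : r^3 ≤ (4/3)^3 := pow_le_pow_left₀ hr hr43 3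
      calc r^5 = r^3 * r^2 := by ring
        _ ≤ (4/3)^3 * r^2 := mul_le_mul_of_nonneg_right h3 (sq_nonneg r)
        _ = (64/27)*r^2 := by norm_num
    have h6 : r^6 ≤ (256/81)*r^2 := by
      have h4 : r^4 ≤ (4/3)^4 := pow_le_pow_left₀ hr hr43 4
      calc r^6 = r^4 * r^2 := by ring
        _ ≤ (4/3)^4 * r^2 := mul_le_mul_of_nonneg_right h4 (sq_nonneg r)
        _ = (256/81)*r^2 := by norm_num
    have hq2lb : 169/100 ≤ q^2 := by
      have := pow_le_pow_left₀ (by norm_num : (0:ℝ) ≤ 13/10) hq13 2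
      norm_num at this ⊢; linarith
    have hq2ub : q^2 ≤ 16/9 := by
      have := pow_le_pow_left₀ hq0.le hq43 2
      norm_num at this ⊢; linarith
    have hq3lb : 2197/1000 ≤ q^3 := by
      have := pow_le_pow_left₀ (by norm_num : (0:ℝ) ≤ 13/10) hq13 3
      norm_num at this ⊢; linarith
    have hq3ub : q^3 ≤ 64/27 := by
      have := pow_le_pow_left₀ hq0.le hq43 3
      norm_num at this ⊢; linarith
    have hr3 : (0:ℝ) ≤ r^3 := by positivity
    have hr4 : (0:ℝ) ≤ r^4 := by positivity
    have hQ2 : 0 ≤ (401*q^3 - 175*q)/512 + (145*q^2 - 175)/256*r + (207*q + 69*q^3)/512*r^2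
        + (31 + 21*q^2)/128*r^3 + (37*q/512 + 47*q^3/1536)*r^4
        - (5 + 5*q^2)/256*r^5 - (5*q/512 + 5*q^3/1536)*r^6 := by
      have hT0 : (401*(2197/1000) - 175*(4/3))/512 ≤ (401*q^3 - 175*q)/512 := by linarith
      have hT1 : (0:ℝ) ≤ (145*q^2 - 175)/256*r := mul_nonneg (by linarith) hr
      have hT2 : (207*(13/10) + 69*(2197/1000))/512*r^2 ≤ (207*q + 69*q^3)/512*r^2 :=
        mul_le_mul_of_nonneg_right (by linarith) (sq_nonneg r)
      have hT3 : (0:ℝ) ≤ (31 + 21*q^2)/128*r^3 := mul_nonneg (by linarith) hr3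
      have hT4 : (0:ℝ) ≤ (37*q/512 + 47*q^3/1536)*r^4 := mul_nonneg (by linarith) hr4
      have hT5 : (5 + 5*q^2)/256*r^5 ≤ 125/972*r^2 := by
        have hr5 : (0:ℝ) ≤ r^5 := by positivity
        calc (5 + 5*q^2)/256*r^5 ≤ (125/2304)*r^5 :=
              mul_le_mul_of_nonneg_right (by linarith) hr5
          _ ≤ (125/2304)*((64/27)*r^2) := by
              have := mul_le_mul_of_nonneg_left h5 (by norm_num : (0:ℝ) ≤ 125/2304)
              linarith
          _ = 125/972*r^2 := by ring
      have hT6 : (5*q/512 + 5*q^3/1536)*r^6 ≤ 430/6561*r^2 := by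
        have hr6 : (0:ℝ) ≤ r^6 := by positivity
        calc (5*q/512 + 5*q^3/1536)*r^6 ≤ (215/10368)*r^6 :=
              mul_le_mul_of_nonneg_right (by linarith) hr6
          _ ≤ (215/10368)*((256/81)*r^2) := by
              have := mul_le_mul_of_nonneg_left h6 (by norm_num : (0:ℝ) ≤ 215/10368)
              linarith
          _ = 430/6561*r^2 := by ring
      linarith [sq_nonneg r]
    have hid : (3*q+q^3)*(1 + t + t^2/2 + t^3/6 - 5*t^4/96) - (3*r + r^3)
        = (r-q)^2 * ((401*q^3 - 175*q)/512 + (145*q^2 - 175)/256*r + (207*q + 69*q^3)/512*r^2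
        + (31 + 21*q^2)/128*r^3 + (37*q/512 + 47*q^3/1536)*r^4
        - (5 + 5*q^2)/256*r^5 - (5*q/512 + 5*q^3/1536)*r^6) := by
      rw [htdef]
      linear_combination (r - q + 27*q^3/512 - 47*q^5/1536 - 5*q^7/1536 - 81*r^2*q/512
        + 13*r^2*q^3/128 + 5*r^2*q^5/384 + 27*r^3/256 - 233*r^4*q/1536 - 5*r^4*q^3/256
        + 31*r^5/384 + 25*r^6*q/1536 - 5*r^7/768) * hq4
    have hcub := cubic_sub_le_exp' htle
    linarith [mul_le_mul_of_nonneg_left hcub hDpos.le, mul_nonneg (sq_nonneg (r-q)) hQ2]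

private lemma deriv3_exp_quad' (a b c : ℝ) (x : ℝ) :
    iteratedDeriv 3 (fun t : ℝ => Real.exp (-(a/2*t^2 + b*t + c))) x
      = (3*a*(a*x+b) - (a*x+b)^3) * Real.exp (-(a/2*x^2 + b*x + c)) := by
  have hp : ∀ y : ℝ, HasDerivAt (fun t : ℝ => -(a/2*t^2 + b*t + c)) (-(a*y+b)) y := by
    intro y
    have hx2 : HasDerivAt (fun t : ℝ => t^2) (2*y) y := by
      simpa using hasDerivAt_pow 2 y
    have h1 := (hx2.const_mul (a/2)).add (((hasDerivAt_id y).const_mul b).add_const c)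
    have h2 := h1.neg
    refine (h2.congr_of_eventuallyEq (Filter.Eventually.of_forall fun t => ?_)).congr_deriv (by ring)
    simp only [Pi.neg_apply, Pi.add_apply, id]; ring
  have hexp : ∀ y : ℝ, HasDerivAt (fun t : ℝ => Real.exp (-(a/2*t^2 + b*t + c)))
      ((-(a*y+b)) * Real.exp (-(a/2*y^2 + b*y + c))) y := by
    intro y
    have := (hp y).exp
    convert this using 1
    ring
  have hg1 : ∀ y : ℝ, HasDerivAt
      (fun t : ℝ => (-(a*t+b)) * Real.exp (-(a/2*t^2 + b*t + c)))
      (((a*y+b)^2 - a) * Real.exp (-(a/2*y^2 + b*y + c))) y := by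
    intro y
    have hlin : HasDerivAt (fun t : ℝ => -(a*t+b)) (-a) y := by
      have := (((hasDerivAt_id y).const_mul a).add_const b).neg
      exact this.congr_deriv (by ring)
    have := hlin.mul (hexp y)
    exact this.congr_deriv (by ring)
  have hg2 : ∀ y : ℝ, HasDerivAt
      (fun t : ℝ => ((a*t+b)^2 - a) * Real.exp (-(a/2*t^2 + b*t + c)))
      ((3*a*(a*y+b) - (a*y+b)^3) * Real.exp (-(a/2*y^2 + b*y + c))) y := by
    intro y
    have hquad : HasDerivAt (fun t : ℝ => (a*t+b)^2 - a) (2*(a*y+b)*a) y := by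
      have hl : HasDerivAt (fun t : ℝ => a*t+b) a y := by
        have := ((hasDerivAt_id y).const_mul a).add_const b
        exact this.congr_deriv (by ring)
      have := (hl.pow 2).sub_const a
      exact this.congr_deriv (by ring)
    have := hquad.mul (hexp y)
    exact this.congr_deriv (by ring)
  have hd1 : deriv (fun t : ℝ => Real.exp (-(a/2*t^2 + b*t + c)))
      = fun y : ℝ => (-(a*y+b)) * Real.exp (-(a/2*y^2 + b*y + c)) :=
    funext fun y => (hexp y).deriv
  have hd2 : deriv (fun y : ℝ => (-(a*y+b)) * Real.exp (-(a/2*y^2 + b*y + c)))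
      = fun y : ℝ => ((a*y+b)^2 - a) * Real.exp (-(a/2*y^2 + b*y + c)) :=
    funext fun y => (hg1 y).deriv
  rw [show (3:ℕ) = 2 + 1 from rfl, iteratedDeriv_succ, iteratedDeriv_succ,
    iteratedDeriv_one, hd1, hd2]
  exact (hg2 x).deriv

theorem stmt_5 (κ N : ℕ) (X : Matrix (Fin κ) (Fin N) ℝ) (b : Fin κ → ℝ)
    (h : (Fin N → ℝ) → ℝ)
    (hh : ∀ z, h z = (1 / 2) * ∑ k, (X.mulVec z k - b k) ^ 2)
    (j : Fin N) (z : Fin N → ℝ) :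
    |iteratedDeriv 3 (fun t : ℝ => Real.exp (-(h (Function.update z j t)))) (z j)|
      ≤ 6 * ((1 / 2) * Real.exp (-Real.sqrt 3 / 2) *
          ((3 : ℝ) ^ ((1 : ℝ) / 4) + (3 : ℝ) ^ (-(1 : ℝ) / 4)))
        * ((Xᵀ * X) j j) ^ ((3 : ℝ) / 2) := by
  classical
  set c : Fin κ → ℝ := fun k => X.mulVec z k - b k - X k j * z j with hcdef
  set A : ℝ := ∑ k, (X k j)^2 with hAdef
  set B : ℝ := ∑ k, X k j * c k with hBdef
  set C : ℝ := (1/2) * ∑ k, (c k)^2 with hCdef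
  -- quadratic expansion of the half-sum of squares
  have hq : ∀ t : ℝ, (1/2) * ∑ k, (X k j * t + c k)^2 = A/2*t^2 + B*t + C := by
    intro t
    have hsum : ∑ k, (X k j * t + c k)^2
        = t^2 * ∑ k, (X k j)^2 + t * (2 * ∑ k, X k j * c k) + ∑ k, (c k)^2 := by
      rw [Finset.mul_sum, Finset.mul_sum, Finset.mul_sum, ← Finset.sum_add_distrib,
        ← Finset.sum_add_distrib]
      exact Finset.sum_congr rfl fun k _ => by ring
    rw [hsum, hAdef, hBdef, hCdef]
    ring
  -- mulVec along a coordinate update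
  have hmv : ∀ (t : ℝ) (k : Fin κ), X.mulVec (Function.update z j t) k - b k
      = X k j * t + c k := by
    intro t k
    have h1 : ∀ i, X k i * Function.update z j t i
        = X k i * z i + (if i = j then X k j * (t - z j) else 0) := by
      intro i
      by_cases hi : i = j
      · subst hi; simp [Function.update_self]; ring
      · simp [Function.update_of_ne hi, hi]
    have h2 : X.mulVec (Function.update z j t) k
        = X.mulVec z k + X k j * (t - z j) := by
      simp only [Matrix.mulVec, dotProduct]
      rw [Finset.sum_congr rfl fun i _ => h1 i, Finset.sum_add_distrib,
        Finset.sum_ite_eq' Finset.univ j (fun _ => X k j * (t - z j))]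
      simp
    rw [h2, hcdef]
    ring
  -- the function is a Gaussian of a quadratic
  have hhu : ∀ t : ℝ, h (Function.update z j t) = A/2*t^2 + B*t + C := by
    intro t
    rw [hh]
    have : ∀ k : Fin κ, (X.mulVec (Function.update z j t) k - b k)^2
        = (X k j * t + c k)^2 := fun k => by rw [hmv]
    rw [Finset.sum_congr rfl fun k _ => this k]
    exact hq t
  have hfun : (fun t : ℝ => Real.exp (-(h (Function.update z j t))))
      = fun t : ℝ => Real.exp (-(A/2*t^2 + B*t + C)) :=
    funext fun t => by rw [hhu t]
  rw [hfun, deriv3_exp_quad' A B C (z j)]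
  -- abbreviations
  set v : ℝ := A * z j + B with hvdef
  have hA0 : 0 ≤ A := Finset.sum_nonneg fun k _ => sq_nonneg _
  set H : ℝ := A/2*(z j)^2 + B*(z j) + C with hHdef
  have hHsum : H = (1/2) * ∑ k, (X k j * z j + c k)^2 := (hq (z j)).symm
  have hH0 : 0 ≤ H := by
    rw [hHsum]
    positivity
  -- Cauchy–Schwarz
  have hvsum : v = ∑ k, X k j * (X k j * z j + c k) := by
    rw [hvdef, hAdef, hBdef, Finset.sum_mul, ← Finset.sum_add_distrib]
    exact Finset.sum_congr rfl fun k _ => by ring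
  have hCS : v^2 ≤ A * (2*H) := by
    have := Finset.sum_mul_sq_le_sq_mul_sq Finset.univ (fun k => X k j)
      (fun k => X k j * z j + c k)
    rw [← hvsum] at this
    calc v^2 ≤ (∑ k, (X k j)^2) * ∑ k, (X k j * z j + c k)^2 := this
      _ = A * (2*H) := by rw [← hAdef, hHsum]; ring
  set s : ℝ := Real.sqrt A with hsdef
  set r : ℝ := Real.sqrt (2*H) with hrdef
  have hs0 : 0 ≤ s := Real.sqrt_nonneg A
  have hr0 : 0 ≤ r := Real.sqrt_nonneg _
  have hs2 : s^2 = A := Real.sq_sqrt hA0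
  have hr2 : r^2 = 2*H := Real.sq_sqrt (by linarith)
  have habsv : |v| ≤ r * s := by
    rw [← Real.sqrt_sq_eq_abs, hrdef, hsdef, ← Real.sqrt_mul (by linarith : (0:ℝ) ≤ 2*H) A]
    exact Real.sqrt_le_sqrt (by linarith [hCS])
  -- the constant, via q = 3^(1/4)
  set q : ℝ := (3:ℝ) ^ ((1:ℝ)/4) with hqdef
  have hq0 : 0 < q := Real.rpow_pos_of_pos (by norm_num) _
  have hq4 : q^4 = 3 := by
    rw [hqdef, ← Real.rpow_natCast ((3:ℝ) ^ ((1:ℝ)/4)) 4,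
      ← Real.rpow_mul (by norm_num : (0:ℝ) ≤ 3)]
    norm_num
  have hsqrt3 : Real.sqrt 3 = q^2 := by
    rw [hqdef, ← Real.rpow_natCast ((3:ℝ) ^ ((1:ℝ)/4)) 2,
      ← Real.rpow_mul (by norm_num : (0:ℝ) ≤ 3), Real.sqrt_eq_rpow]
    norm_num
  have hqinv : (3:ℝ) ^ (-(1:ℝ)/4) = q^3/3 := by
    have h1 : (3:ℝ) ^ (-(1:ℝ)/4) = q⁻¹ := by
      rw [hqdef, show (-(1:ℝ)/4) = -(1/4) by norm_num,
        Real.rpow_neg (by norm_num : (0:ℝ) ≤ 3)]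
    rw [h1]
    exact inv_eq_of_mul_eq_one_right (by linear_combination hq4/3)
  have hconst : 6 * ((1/2) * Real.exp (-Real.sqrt 3 / 2) *
      ((3:ℝ) ^ ((1:ℝ)/4) + (3:ℝ) ^ (-(1:ℝ)/4)))
      = (3*q + q^3) * Real.exp (-(q^2/2)) := by
    rw [hqinv, hsqrt3, ← hqdef, show -q^2/2 = -(q^2/2) by ring]
    ring
  -- A^(3/2) = s^3
  have hAXX : (Xᵀ * X) j j = A := by
    rw [Matrix.mul_apply, hAdef]
    exact Finset.sum_congr rfl fun k _ => by rw [Matrix.transpose_apply, sq]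
  have hA32 : ((Xᵀ * X) j j) ^ ((3:ℝ)/2) = s^3 := by
    rw [hAXX, ← hs2, ← Real.rpow_natCast s 2, ← Real.rpow_mul hs0,
      show ((2:ℕ):ℝ) * ((3:ℝ)/2) = ((3:ℕ):ℝ) by norm_num, Real.rpow_natCast]
  rw [hconst, hA32]
  -- the exponential argument
  have hHr : -H = -(r^2/2) := by rw [hr2]; ring
  rw [hHr]
  -- final estimate
  have habs3 : |3*A*v - v^3| ≤ 3*A*|v| + |v|^3 := by
    calc |3*A*v - v^3| ≤ |3*A*v| + |v^3| := abs_sub _ _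
      _ = 3*A*|v| + |v|^3 := by
        rw [abs_mul, abs_pow, abs_mul, abs_of_nonneg (by norm_num : (0:ℝ) ≤ 3),
          abs_of_nonneg hA0]
        try ring
  have hb1 : 3*A*|v| ≤ 3*A*(r*s) := by
    apply mul_le_mul_of_nonneg_left habsv
    positivity
  have hb2 : |v|^3 ≤ (r*s)^3 := pow_le_pow_left₀ (abs_nonneg v) habsv 3
  have hkey := key_sup' q r hq0 hq4 hr0
  have hs3 : 0 ≤ s^3 := by positivity
  calc |(3*A*v - v^3) * Real.exp (-(r^2/2))|
      = |3*A*v - v^3| * Real.exp (-(r^2/2)) := by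
        rw [abs_mul, abs_of_nonneg (Real.exp_pos _).le]
    _ ≤ (3*A*(r*s) + (r*s)^3) * Real.exp (-(r^2/2)) := by
        apply mul_le_mul_of_nonneg_right _ (Real.exp_pos _).le
        linarith
    _ = s^3 * ((3*r + r^3) * Real.exp (-(r^2/2))) := by rw [← hs2]; ring
    _ ≤ s^3 * ((3*q + q^3) * Real.exp (-(q^2/2))) :=
        mul_le_mul_of_nonneg_left hkey hs3
    _ = (3*q + q^3) * Real.exp (-(q^2/2)) * s^3 := by ring
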